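/- If f : ℝ≥0 → ℝ is measurable and c.u.d. mod 1, and g : ℝ≥0 → ℝ is measurable with lim_{t→∞}(g(t) − f(t)) existing in ℝ, then g is c.u.d. mod 1. -/

import Mathlib

open MeasureTheory Filter Set
open scoped Classical

/-- Base-`b` significand: `S_b(x) ∈ [1,b)` with `|x| = S_b(x)·b^k`; `S_b(0)=0`. -/
noncomputable def significand (b : ℕ) (x : ℝ) : ℝ :=
  if x = 0 then 0 else |x| / (b : ℝ) ^ (Int.log b |x|)

/-- `f` is `b`-Benford. -/
noncomputable def IsBenford (b : ℕ) (f : ℝ → ℝ) : Prop :=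
  ∀ s : ℝ, 1 ≤ s → s < (b : ℝ) →
    Tendsto (fun T : ℝ =>
        (volume {t : ℝ | 0 ≤ t ∧ t ≤ T ∧ significand b (f t) ≤ s}).toReal / T)
      atTop (nhds (Real.logb b s))

/-- A subset of the circle `ℝ/ℤ` is an arc if it is the image of an interval. -/
def IsArc (J : Set UnitAddCircle) : Prop :=
  ∃ a c : ℝ, J = (fun x : ℝ => (x : UnitAddCircle)) '' Set.Ico a c

/-- `f` is continuously uniformly distributed mod 1. -/
noncomputable def CUDMod1 (f : ℝ → ℝ) : Prop :=
  ∀ J : Set UnitAddCircle, IsArc J →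
    Tendsto (fun T : ℝ =>
        (volume {t : ℝ | 0 ≤ t ∧ t ≤ T ∧ ((f t : UnitAddCircle) ∈ J)}).toReal / T)
      atTop (nhds ((volume J).toReal))

/-- A sequence (indexed from 1) is uniformly distributed mod 1. -/
noncomputable def UDMod1 (x : ℕ → ℝ) : Prop :=
  ∀ J : Set UnitAddCircle, IsArc J →
    Tendsto (fun N : ℕ =>
        ((Finset.Icc 1 N).filter (fun n => ((x n : UnitAddCircle) ∈ J))).card / (N : ℝ))
      atTop (nhds ((volume J).toReal))

/-- The set `Δ_W` associated with `W ⊆ ℂ`. -/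
noncomputable def deltaSet (W : Set ℂ) : Set ℝ :=
  {x | ∃ z ∈ W, ∃ w ∈ W, x = 1 + (Complex.arg z - Complex.arg w) / (2 * Real.pi)}

/-- `W ⊆ ℂ` is `b`-nonresonant. -/
noncomputable def BNonresonant (b : ℕ) (W : Set ℂ) : Prop :=
  ∀ r : ℝ, 0 < r → (W ∩ {z | ‖z‖ = r}).Nonempty →
    (deltaSet (W ∩ {z | ‖z‖ = r}) ∩ Set.range ((↑) : ℚ → ℝ) = {1}) ∧
    Real.logb b r ∉ Submodule.span ℚ (deltaSet (W ∩ {z | ‖z‖ = r}))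

/-- `Z ⊆ ℂ` is exponentially `b`-nonresonant. -/
noncomputable def ExpBNonresonant (b : ℕ) (Z : Set ℂ) : Prop :=
  ∃ t : ℝ, 0 ≤ t ∧ BNonresonant b ((fun z => Complex.exp (t * z)) '' Z)

/-- The spectrum (set of complex eigenvalues) of a real square matrix. -/
noncomputable def realSpectrum {d : ℕ} (A : Matrix (Fin d) (Fin d) ℝ) : Set ℂ :=
  spectrum ℂ (A.map (algebraMap ℝ ℂ))


/-! ### Auxiliary lemmas -/

lemma mem_arc_iff {a ℓ : ℝ} (hl1 : ℓ ≤ 1) (x : ℝ) :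
    ((x : UnitAddCircle) ∈ (fun y : ℝ => (y : UnitAddCircle)) '' Ico a (a + ℓ)) ↔
      Int.fract (x - a) < ℓ := by
  constructor
  · rintro ⟨y, hy, hxy⟩
    obtain ⟨n, hn⟩ := AddSubgroup.mem_zmultiples_iff.mp (QuotientAddGroup.eq_iff_sub_mem.mp hxy)
    rw [zsmul_eq_mul, mul_one] at hn
    have hx : x - a = (y - a) - n := by linarith
    have h1 : Int.fract (y - a) = y - a :=
      Int.fract_eq_self.mpr ⟨by linarith [hy.1], by linarith [hy.2]⟩
    rw [hx, Int.fract_sub_intCast, h1]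
    linarith [hy.2]
  · intro h
    refine ⟨a + Int.fract (x - a), ⟨le_add_of_nonneg_right (Int.fract_nonneg _), by linarith⟩, ?_⟩
    refine QuotientAddGroup.eq_iff_sub_mem.mpr (AddSubgroup.mem_zmultiples_iff.mpr ⟨-⌊x - a⌋, ?_⟩)
    rw [zsmul_eq_mul, mul_one, Int.fract]
    push_cast
    ring

lemma arc_volume {a ℓ : ℝ} (hl0 : 0 < ℓ) (hl1 : ℓ ≤ 1) :
    volume ((fun y : ℝ => (y : UnitAddCircle)) '' Ico a (a + ℓ)) = ENNReal.ofReal ℓ := by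
  set J := (fun y : ℝ => (y : UnitAddCircle)) '' Ico a (a + ℓ) with hJ
  have hpre : (QuotientAddGroup.mk ⁻¹' J : Set ℝ) = {x : ℝ | Int.fract (x - a) < ℓ} := by
    ext x
    exact mem_arc_iff hl1 x
  have hpremeas : MeasurableSet {x : ℝ | Int.fract (x - a) < ℓ} := by
    have : {x : ℝ | Int.fract (x - a) < ℓ} = (fun x : ℝ => Int.fract (x - a)) ⁻¹' Iio ℓ := rfl
    rw [this]
    exact ((measurable_id.sub_const a).fract) measurableSet_Iio
  have hmeas : MeasurableSet J := by
    rw [measurableSet_quotient]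
    show MeasurableSet (QuotientAddGroup.mk ⁻¹' J : Set ℝ)
    rw [hpre]; exact hpremeas
  rw [AddCircle.add_projection_respects_measure (T := 1) a hmeas, hpre]
  have hset : {x : ℝ | Int.fract (x - a) < ℓ} ∩ Ioc a (a + 1) = Ioo a (a + ℓ) ∪ {a + 1} := by
    ext x
    simp only [mem_inter_iff, mem_setOf_eq, mem_Ioc, mem_Ioo, mem_union, mem_singleton_iff]
    constructor
    · rintro ⟨hfr, hx1, hx2⟩
      rcases eq_or_lt_of_le hx2 with h | h
      · exact Or.inr h
      · have : Int.fract (x - a) = x - a :=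
          Int.fract_eq_self.mpr ⟨by linarith, by linarith⟩
        exact Or.inl ⟨hx1, by linarith [this ▸ hfr]⟩
    · rintro (⟨h1, h2⟩ | rfl)
      · have : Int.fract (x - a) = x - a :=
          Int.fract_eq_self.mpr ⟨by linarith, by linarith⟩
        exact ⟨by rw [this]; linarith, h1, by linarith⟩
      · refine ⟨?_, by linarith, le_refl _⟩
        have : a + 1 - a = (1 : ℝ) := by ring
        rw [this, Int.fract_one]
        exact hl0
  rw [hset]
  apply le_antisymm
  · refine le_trans (measure_union_le _ _) ?_
    simp [Real.volume_Ioo, add_sub_cancel_left]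
  · refine le_trans ?_ (measure_mono subset_union_left)
    simp [Real.volume_Ioo, add_sub_cancel_left]

lemma tendsto_fract_of_cud (f g : ℝ → ℝ) (hcud : CUDMod1 f) (L : ℝ)
    (hlim : Tendsto (fun t => g t - f t) atTop (nhds L)) (a ℓ : ℝ) (hl0 : 0 < ℓ) (hl1 : ℓ < 1) :
    Tendsto (fun T : ℝ => (volume {t : ℝ | 0 ≤ t ∧ t ≤ T ∧ Int.fract (g t - a) < ℓ}).toReal / T)
      atTop (nhds ℓ) := by
  have hF : ∀ α m : ℝ, 0 < m → m ≤ 1 →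
      Tendsto (fun T : ℝ =>
        (volume {t : ℝ | 0 ≤ t ∧ t ≤ T ∧ Int.fract (f t - α) < m}).toReal / T) atTop (nhds m) := by
    intro α m hm0 hm1
    have h := hcud _ ⟨α, α + m, rfl⟩
    rw [arc_volume hm0 hm1, ENNReal.toReal_ofReal hm0.le] at h
    refine h.congr fun T => ?_
    have hs : {t : ℝ | 0 ≤ t ∧ t ≤ T ∧
        ((f t : UnitAddCircle) ∈ (fun x : ℝ => (x : UnitAddCircle)) '' Ico α (α + m))} =
        {t : ℝ | 0 ≤ t ∧ t ≤ T ∧ Int.fract (f t - α) < m} := by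
      ext t
      simp only [mem_setOf_eq, mem_arc_iff hm1]
    rw [hs]
  rw [Metric.tendsto_nhds]
  intro ε' hε'
  set ε := min (ε' / 8) (min (ℓ / 3) ((1 - ℓ) / 2)) with hε
  have hε0 : 0 < ε := lt_min (by linarith) (lt_min (by linarith) (by linarith))
  have hεa : ε ≤ ε' / 8 := min_le_left _ _
  have hεb : ε ≤ ℓ / 3 := le_trans (min_le_right _ _) (min_le_left _ _)
  have hεc : ε ≤ (1 - ℓ) / 2 := le_trans (min_le_right _ _) (min_le_right _ _)
  have h2 : ℓ + 2 * ε ≤ 1 := by linarith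
  have h3 : 0 < ℓ - 2 * ε := by linarith
  obtain ⟨T₀, hT₀⟩ := eventually_atTop.mp (Metric.tendsto_nhds.mp hlim ε hε0)
  set T₁ : ℝ := max T₀ 0 with hT₁def
  have hT₁0 : 0 ≤ T₁ := le_max_right _ _
  have hplus := Metric.tendsto_nhds.mp (hF (a - L - ε) (ℓ + 2 * ε) (by linarith) h2) ε hε0
  have hminus := Metric.tendsto_nhds.mp (hF (a - L + ε) (ℓ - 2 * ε) h3 (by linarith)) ε hε0
  have h0 : Tendsto (fun T : ℝ => T₁ / T) atTop (nhds 0) := by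
    simpa [div_eq_mul_inv] using tendsto_inv_atTop_zero.const_mul T₁
  have hC := Metric.tendsto_nhds.mp h0 ε hε0
  filter_upwards [hplus, hminus, hC, eventually_ge_atTop (max T₁ 1)] with T hA hB hCt hT
  have hT1 : (1 : ℝ) ≤ T := le_trans (le_max_right _ _) hT
  have hTpos : 0 < T := by linarith
  have hTT1 : T₁ ≤ T := le_trans (le_max_left _ _) hT
  set SG := {t : ℝ | 0 ≤ t ∧ t ≤ T ∧ Int.fract (g t - a) < ℓ} with hSG
  set SP := {t : ℝ | 0 ≤ t ∧ t ≤ T ∧ Int.fract (f t - (a - L - ε)) < ℓ + 2 * ε} with hSP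
  set SM := {t : ℝ | 0 ≤ t ∧ t ≤ T ∧ Int.fract (f t - (a - L + ε)) < ℓ - 2 * ε} with hSM
  have hfin : ∀ s : Set ℝ, s ⊆ Icc 0 T → volume s ≠ ⊤ :=
    fun s hs => ((measure_mono hs).trans_lt measure_Icc_lt_top).ne
  have hSGfin : volume SG ≠ ⊤ := hfin _ fun t ht => ⟨ht.1, ht.2.1⟩
  have hSPfin : volume SP ≠ ⊤ := hfin _ fun t ht => ⟨ht.1, ht.2.1⟩
  have hSMfin : volume SM ≠ ⊤ := hfin _ fun t ht => ⟨ht.1, ht.2.1⟩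
  have hsub1 : SG ⊆ SP ∪ Icc 0 T₁ := by
    rintro t ⟨ht0, htT, hfr⟩
    by_cases htT₁ : t ≤ T₁
    · exact Or.inr ⟨ht0, htT₁⟩
    · left
      have hδ := hT₀ t (le_trans (le_max_left _ _) (le_of_not_ge htT₁))
      rw [Real.dist_eq] at hδ
      obtain ⟨hd1, hd2⟩ := abs_lt.mp hδ
      set n := ⌊g t - a⌋ with hn
      have efr : g t - a - (n : ℝ) = Int.fract (g t - a) := Int.self_sub_floor _
      have e0 : 0 ≤ g t - a - (n : ℝ) := by rw [efr]; exact Int.fract_nonneg _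
      have e1 : g t - a - (n : ℝ) < ℓ := by rw [efr]; exact hfr
      have key : Int.fract (f t - (a - L - ε)) = f t - (a - L - ε) - n := by
        have h01 : f t - (a - L - ε) - (n : ℝ) ∈ Ico (0 : ℝ) 1 :=
          ⟨by linarith, by linarith⟩
        calc Int.fract (f t - (a - L - ε))
            = Int.fract (f t - (a - L - ε) - n) := (Int.fract_sub_intCast _ _).symm
          _ = f t - (a - L - ε) - n := Int.fract_eq_self.mpr h01
      exact ⟨ht0, htT, by rw [key]; linarith⟩
  have hsub2 : SM ⊆ SG ∪ Icc 0 T₁ := by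
    rintro t ⟨ht0, htT, hfr⟩
    by_cases htT₁ : t ≤ T₁
    · exact Or.inr ⟨ht0, htT₁⟩
    · left
      have hδ := hT₀ t (le_trans (le_max_left _ _) (le_of_not_ge htT₁))
      rw [Real.dist_eq] at hδ
      obtain ⟨hd1, hd2⟩ := abs_lt.mp hδ
      set n := ⌊f t - (a - L + ε)⌋ with hn
      have efr : f t - (a - L + ε) - (n : ℝ) = Int.fract (f t - (a - L + ε)) :=
        Int.self_sub_floor _
      have e0 : 0 ≤ f t - (a - L + ε) - (n : ℝ) := by rw [efr]; exact Int.fract_nonneg _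
      have e1 : f t - (a - L + ε) - (n : ℝ) < ℓ - 2 * ε := by rw [efr]; exact hfr
      have key : Int.fract (g t - a) = g t - a - n := by
        have h01 : g t - a - (n : ℝ) ∈ Ico (0 : ℝ) 1 := ⟨by linarith, by linarith⟩
        calc Int.fract (g t - a)
            = Int.fract (g t - a - n) := (Int.fract_sub_intCast _ _).symm
          _ = g t - a - n := Int.fract_eq_self.mpr h01
      exact ⟨ht0, htT, by rw [key]; linarith⟩
  have hIccT₁ : (volume (Icc (0:ℝ) T₁)).toReal = T₁ := by
    rw [Real.volume_Icc, sub_zero, ENNReal.toReal_ofReal hT₁0]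
  have bound : ∀ s₁ s₂ : Set ℝ, s₁ ⊆ s₂ ∪ Icc 0 T₁ → volume s₂ ≠ ⊤ → volume s₁ ≠ ⊤ →
      (volume s₁).toReal ≤ (volume s₂).toReal + T₁ := by
    intro s₁ s₂ hsub hfin2 hfin1
    have h := (measure_mono hsub).trans (measure_union_le (μ := (volume : Measure ℝ)) s₂ (Icc 0 T₁))
    calc (volume s₁).toReal
        ≤ (volume s₂ + volume (Icc 0 T₁)).toReal :=
          ENNReal.toReal_mono (ENNReal.add_ne_top.mpr ⟨hfin2, measure_Icc_lt_top.ne⟩) h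
      _ = (volume s₂).toReal + (volume (Icc (0:ℝ) T₁)).toReal :=
          ENNReal.toReal_add hfin2 measure_Icc_lt_top.ne
      _ = (volume s₂).toReal + T₁ := by rw [hIccT₁]
  have ineq1 := bound SG SP hsub1 hSPfin hSGfin
  have ineq2 := bound SM SG hsub2 hSGfin hSMfin
  rw [Real.dist_eq] at hA hB hCt ⊢
  obtain ⟨hA1, hA2⟩ := abs_lt.mp hA
  obtain ⟨hB1, hB2⟩ := abs_lt.mp hB
  obtain ⟨hC1, hC2⟩ := abs_lt.mp hCt
  have d1 : (volume SG).toReal / T ≤ (volume SP).toReal / T + T₁ / T := by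
    rw [← add_div]; exact (div_le_div_iff_of_pos_right hTpos).mpr ineq1
  have d2 : (volume SM).toReal / T ≤ (volume SG).toReal / T + T₁ / T := by
    rw [← add_div]; exact (div_le_div_iff_of_pos_right hTpos).mpr ineq2
  rw [abs_lt]
  constructor <;> [skip; skip] <;> simp only [sub_zero] at hC1 hC2 <;>
    simp only [sub_lt_iff_lt_add, lt_sub_iff_add_lt] at hA1 hA2 hB1 hB2 ⊢ <;> linarith

/-- c.u.d. mod 1 is stable under perturbations with a finite limit. -/
theorem cud_of_tendsto_sub (f g : ℝ → ℝ) (hf : Measurable f) (hg : Measurable g)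
    (hcud : CUDMod1 f) (L : ℝ)
    (hlim : Filter.Tendsto (fun t => g t - f t) Filter.atTop (nhds L)) :
    CUDMod1 g := by
  rintro J ⟨a, c, rfl⟩
  rcases le_or_gt c a with hac | hac
  · -- empty arc
    rw [Ico_eq_empty (not_lt.mpr hac)]
    simp only [image_empty, mem_empty_iff_false, and_false, setOf_false, measure_empty,
      ENNReal.toReal_zero, zero_div]
    exact tendsto_const_nhds
  · rcases le_or_gt 1 (c - a) with hca | hca
    · -- full circle
      have huniv : (fun x : ℝ => (x : UnitAddCircle)) '' Ico a c = univ := by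
        rw [eq_univ_iff_forall]
        intro z
        induction z using QuotientAddGroup.induction_on with
        | H x =>
          have hmem : ((x : UnitAddCircle) ∈
              (fun y : ℝ => (y : UnitAddCircle)) '' Ico a (a + 1)) :=
            (mem_arc_iff le_rfl x).mpr (Int.fract_lt_one _)
          exact image_mono (Ico_subset_Ico_right (by linarith)) hmem
      rw [huniv, UnitAddCircle.measure_univ, ENNReal.toReal_one]
      have heq : (fun T : ℝ =>
          (volume {t : ℝ | 0 ≤ t ∧ t ≤ T ∧ ((g t : UnitAddCircle) ∈ (univ : Set UnitAddCircle))}).toReal / T)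
          =ᶠ[atTop] (fun _ : ℝ => (1 : ℝ)) := by
        filter_upwards [eventually_ge_atTop (1 : ℝ)] with T hT
        have hset : {t : ℝ | 0 ≤ t ∧ t ≤ T ∧
            ((g t : UnitAddCircle) ∈ (univ : Set UnitAddCircle))} = Icc 0 T := by
          ext t; simp [mem_Icc, and_assoc]
        rw [hset, Real.volume_Icc, sub_zero, ENNReal.toReal_ofReal (by linarith)]
        exact div_self (by linarith)
      exact (Tendsto.congr' heq.symm tendsto_const_nhds)
    · -- proper arc
      have hl0 : 0 < c - a := by linarith
      have hca' : a + (c - a) = c := by ring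
      have hvol : volume ((fun x : ℝ => (x : UnitAddCircle)) '' Ico a c) =
          ENNReal.ofReal (c - a) := by
        have h := arc_volume (a := a) hl0 hca.le
        rwa [hca'] at h
      rw [hvol, ENNReal.toReal_ofReal hl0.le]
      have hsets : ∀ T : ℝ, {t : ℝ | 0 ≤ t ∧ t ≤ T ∧
          ((g t : UnitAddCircle) ∈ (fun x : ℝ => (x : UnitAddCircle)) '' Ico a c)} =
          {t : ℝ | 0 ≤ t ∧ t ≤ T ∧ Int.fract (g t - a) < c - a} := by
        intro T
        ext t
        have hm := mem_arc_iff (a := a) hca.le (g t)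
        rw [hca'] at hm
        simp only [mem_setOf_eq, hm]
      refine (tendsto_fract_of_cud f g hcud L hlim a (c - a) hl0 hca).congr fun T => ?_
      rw [hsets T]
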